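/- Let P_{X,Y} ∈ 𝒫^{𝒳×𝒴}, set K = min(|𝒳|,|𝒴|), let B̃ be its canonical dependence matrix, and fix k ∈ {1,…,K−1}. Consider all pairs of feature maps f = (f₁,…,f_k): 𝒳 → ℝ^k and g = (g₁,…,g_k): 𝒴 → ℝ^k satisfying Σ_x P_X(x) f(x) = 0, Σ_y P_Y(y) g(y) = 0, Σ_x P_X(x) f(x)f(x)ᵀ = I_k and Σ_y P_Y(y) g(y)g(y)ᵀ = I_k. Over this (nonempty) set, the maximum of Σ_{i=1}^k Σ_{x,y} P_{X,Y}(x,y) f_i(x) g_i(y) is attained and equals Σ_{i=1}^k σ_i(B̃) (the Ky Fan k-norm of B̃); equivalently, the minimum of Σ_{x,y} P_{X,Y}(x,y)·‖f(x) − g(y)‖² over the same set is attained and equals 2k − 2·Σ_{i=1}^k σ_i(B̃). -/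

import Mathlib

open Matrix

/-- The `i`-th largest element (0-indexed) of a finite family of real numbers
(by convention `0` if `i` is out of range). -/
noncomputable def ithLargest {ι : Type*} [Fintype ι] (f : ι → ℝ) (i : ℕ) : ℝ :=
  (((Finset.univ.val.map f).sort (· ≤ ·)).reverse).getD i 0

/-- The `i`-th largest singular value (0-indexed) of a real matrix `A`: the square root of
the `i`-th largest eigenvalue of `Aᴴ * A` (over `ℝ`, `Aᴴ = Aᵀ`). -/
noncomputable def singularValue {m n : Type*} [Fintype m] [Fintype n] [DecidableEq n]
    (A : Matrix m n ℝ) (i : ℕ) : ℝ :=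
  Real.sqrt (ithLargest (Matrix.isHermitian_conjTranspose_mul_self A).eigenvalues i)

section ith

variable {ι : Type*} [Fintype ι]

lemma ofFn_reverse {n : ℕ} (g : Fin n → ℝ) :
    (List.ofFn g).reverse = List.ofFn (g ∘ Fin.rev) := by
  apply List.ext_getElem
  · simp
  · intro i h1 h2
    simp only [List.length_reverse, List.length_ofFn] at h1
    rw [List.getElem_reverse, List.getElem_ofFn, List.getElem_ofFn]
    congr 1
    ext
    simp [Fin.rev]
    omega

lemma ofFn_multiset_eq {n : ℕ} {α : Type*} [Fintype α] (g : α → ℝ) (π : Fin n ≃ α) :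
    (↑(List.ofFn (g ∘ π)) : Multiset ℝ) = Finset.univ.val.map g := by
  rw [← Fin.univ_val_map]
  have : Finset.univ.val.map (g ∘ ⇑π) = (Finset.univ.val.map ⇑π).map g := by
    rw [Multiset.map_map]
  rw [this]
  congr 1
  exact Multiset.map_univ_val_equiv π

/-- uniqueness: any antitone enumeration computes ithLargest -/
lemma ithLargest_eq_of_antitone (f : ι → ℝ) (d : Fin (Fintype.card ι) → ℝ)
    (hd : Antitone d) (hperm : (↑(List.ofFn d) : Multiset ℝ) = Finset.univ.val.map f)
    (i : ℕ) (hi : i < Fintype.card ι) : ithLargest f i = d ⟨i, hi⟩ := by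
  have hrev : ((Finset.univ.val.map f).sort (· ≤ ·)) = List.ofFn (d ∘ Fin.rev) := by
    have hsorted : List.Pairwise (· ≤ ·) (List.ofFn (d ∘ Fin.rev)) := by
      rw [← List.sortedLE_iff_pairwise, List.sortedLE_ofFn_iff]
      intro a b hab
      exact hd (Fin.rev_le_rev.2 hab)
    refine List.Perm.eq_of_pairwise' (Multiset.pairwise_sort ..) hsorted ?_
    rw [← Multiset.coe_eq_coe, Multiset.sort_eq, ← hperm]
    have h2 : (↑(List.ofFn (d ∘ Fin.rev)) : Multiset ℝ) = ↑(List.ofFn d) := by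
      have : d ∘ Fin.rev = d ∘ ⇑(Fin.revPerm.trans (Equiv.refl _)) := by ext j; simp
      rw [this, ofFn_multiset_eq d (Fin.revPerm.trans (Equiv.refl _)), Fin.univ_val_map]
    rw [h2]
  have : ((Finset.univ.val.map f).sort (· ≤ ·)).reverse = List.ofFn d := by
    rw [hrev, ofFn_reverse]
    congr 1
    ext j
    simp [Function.comp, Fin.rev_rev]
  rw [ithLargest, this, List.getD_eq_getElem _ _ (by simpa using hi), List.getElem_ofFn]

lemma ithLargest_of_ge (f : ι → ℝ) (i : ℕ) (hi : Fintype.card ι ≤ i) :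
    ithLargest f i = 0 := by
  rw [ithLargest, List.getD_eq_default]
  simp [hi]

/-- existence of an antitone enumeration -/
lemma exists_antitone_enum (f : ι → ℝ) :
    ∃ (π : Fin (Fintype.card ι) ≃ ι), Antitone (f ∘ π) ∧
      (↑(List.ofFn (f ∘ π)) : Multiset ℝ) = Finset.univ.val.map f := by
  classical
  obtain ⟨e⟩ : Nonempty (Fin (Fintype.card ι) ≃ ι) := ⟨(Fintype.equivFin ι).symm⟩
  set σ := Tuple.sort (f ∘ e)
  refine ⟨(Fin.revPerm.trans σ).trans e, ?_, ?_⟩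
  · intro a b hab
    have := Tuple.monotone_sort (f ∘ e) (Fin.rev_le_rev.2 hab)
    simpa [σ] using this
  · exact ofFn_multiset_eq f ((Fin.revPerm.trans σ).trans e)

/-- enumeration with values -/
lemma ithLargest_enum (f : ι → ℝ) :
    ∃ π : Fin (Fintype.card ι) ≃ ι, Antitone (f ∘ π) ∧
      ∀ i : Fin (Fintype.card ι), ithLargest f (i : ℕ) = f (π i) := by
  obtain ⟨π, hanti, hperm⟩ := exists_antitone_enum f
  exact ⟨π, hanti, fun i => ithLargest_eq_of_antitone f (f ∘ π) hanti hperm i i.2⟩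

lemma ithLargest_nonneg (f : ι → ℝ) (hf : ∀ j, 0 ≤ f j) (i : ℕ) : 0 ≤ ithLargest f i := by
  rcases lt_or_ge i (Fintype.card ι) with hi | hi
  · obtain ⟨π, _, hval⟩ := ithLargest_enum f
    rw [show i = ((⟨i, hi⟩ : Fin (Fintype.card ι)) : ℕ) from rfl, hval]
    exact hf _
  · rw [ithLargest_of_ge f i hi]

lemma ithLargest_antitone (f : ι → ℝ) {i j : ℕ} (hij : i ≤ j) (hj : j < Fintype.card ι) :
    ithLargest f j ≤ ithLargest f i := by
  obtain ⟨π, hanti, hval⟩ := ithLargest_enum f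
  have hi : i < Fintype.card ι := lt_of_le_of_lt hij hj
  rw [show j = ((⟨j, hj⟩ : Fin _) : ℕ) from rfl, hval,
      show i = ((⟨i, hi⟩ : Fin _) : ℕ) from rfl, hval]
  exact hanti (by exact hij)

lemma sum_ithLargest_comp (f : ι → ℝ) (F : ℝ → ℝ) :
    ∑ i ∈ Finset.range (Fintype.card ι), F (ithLargest f i) = ∑ j, F (f j) := by
  obtain ⟨π, _, hval⟩ := ithLargest_enum f
  rw [← Fin.sum_univ_eq_sum_range (fun i => F (ithLargest f i)) (Fintype.card ι),
      ← Equiv.sum_comp π (fun j => F (f j))]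
  exact Finset.sum_congr rfl fun i _ => by rw [hval]

lemma ithLargest_comp_monotone (f : ι → ℝ) (G : ℝ → ℝ) (hG : Monotone G) (hG0 : G 0 = 0)
    (i : ℕ) : ithLargest (fun j => G (f j)) i = G (ithLargest f i) := by
  rcases lt_or_ge i (Fintype.card ι) with hi | hi
  · obtain ⟨π, hanti, hperm⟩ := exists_antitone_enum f
    have hd : Antitone (fun j : Fin (Fintype.card ι) => G (f (π j))) :=
      fun a b hab => hG (hanti hab)
    have hperm' : (↑(List.ofFn (fun j => G (f (π j)))) : Multiset ℝ)
        = Finset.univ.val.map (fun j => G (f j)) := by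
      have h1 : List.ofFn (fun j => G (f (π j)))
          = (List.ofFn (f ∘ π)).map G := by rw [List.map_ofFn]; rfl
      have h2 : Finset.univ.val.map (fun j => G (f j))
          = (Finset.univ.val.map f).map G := by rw [Multiset.map_map]; rfl
      rw [h1, h2, ← hperm]
      rfl
    rw [ithLargest_eq_of_antitone _ _ hd hperm' i hi,
        ithLargest_eq_of_antitone f (f ∘ π) hanti hperm i hi]
    rfl
  · rw [ithLargest_of_ge _ i hi, ithLargest_of_ge f i hi, hG0]

/-- LP bound: Σ f c ≤ sum of top k values. -/
lemma lp_bound (f : ι → ℝ) (hf : ∀ j, 0 ≤ f j) (c : ι → ℝ)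
    (h0 : ∀ j, 0 ≤ c j) (h1 : ∀ j, c j ≤ 1) (k : ℕ)
    (hsum : ∑ j, c j ≤ (k : ℝ)) (hk : k < Fintype.card ι) :
    ∑ j, f j * c j ≤ ∑ i ∈ Finset.range k, ithLargest f i := by
  set τ := ithLargest f k with hτ
  have hτ0 : 0 ≤ τ := ithLargest_nonneg f hf k
  have hpt : ∀ j, f j * c j ≤ τ * c j + max (f j - τ) 0 := by
    intro j
    rcases le_or_gt (f j) τ with h | h
    · have : max (f j - τ) 0 = 0 := max_eq_right (by linarith)
      rw [this]
      nlinarith [h0 j]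
    · have : max (f j - τ) 0 = f j - τ := max_eq_left (by linarith)
      rw [this]
      nlinarith [h0 j, h1 j]
  calc ∑ j, f j * c j ≤ ∑ j, (τ * c j + max (f j - τ) 0) := Finset.sum_le_sum fun j _ => hpt j
    _ = τ * (∑ j, c j) + ∑ j, max (f j - τ) 0 := by
        rw [Finset.sum_add_distrib, Finset.mul_sum]
    _ ≤ τ * k + ∑ i ∈ Finset.range (Fintype.card ι), max (ithLargest f i - τ) 0 := by
        rw [sum_ithLargest_comp f (fun t => max (t - τ) 0)]
        have := mul_le_mul_of_nonneg_left hsum hτ0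
        linarith
    _ = τ * k + ∑ i ∈ Finset.range k, max (ithLargest f i - τ) 0 := by
        congr 1
        rw [← Finset.sum_range_add_sum_Ico _ (le_of_lt hk)]
        have : ∑ i ∈ Finset.Ico k (Fintype.card ι), max (ithLargest f i - τ) 0 = 0 := by
          apply Finset.sum_eq_zero
          intro i hi
          rw [Finset.mem_Ico] at hi
          have : ithLargest f i ≤ τ := ithLargest_antitone f hi.1 hi.2
          exact max_eq_right (by linarith)
        linarith
    _ = τ * k + ∑ i ∈ Finset.range k, (ithLargest f i - τ) := by
        congr 1
        apply Finset.sum_congr rfl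
        intro i hi
        rw [Finset.mem_range] at hi
        have : τ ≤ ithLargest f i := ithLargest_antitone f (le_of_lt hi) hk
        exact max_eq_left (by linarith)
    _ = ∑ i ∈ Finset.range k, ithLargest f i := by
        rw [Finset.sum_sub_distrib]
        simp [Finset.sum_const, mul_comm]

/-- Bessel inequality in coordinate form. -/
lemma bessel_sum {κ α : Type*} [DecidableEq κ] [Fintype α] (s : Finset κ) (e : κ → α → ℝ) (x : α → ℝ)
    (h : ∀ i ∈ s, ∀ j ∈ s, ∑ a, e i a * e j a = (if i = j then 1 else 0)) :
    ∑ j ∈ s, (∑ a, e j a * x a) ^ 2 ≤ ∑ a, x a * x a := by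
  classical
  set c : κ → ℝ := fun j => ∑ a, e j a * x a with hc
  have key : (0:ℝ) ≤ ∑ a, (x a - ∑ j ∈ s, c j * e j a) ^ 2 :=
    Finset.sum_nonneg fun a _ => sq_nonneg _
  have expand : ∑ a, (x a - ∑ j ∈ s, c j * e j a) ^ 2
      = ∑ a, x a * x a - ∑ j ∈ s, c j ^ 2 := by
    have h1 : ∀ a, (x a - ∑ j ∈ s, c j * e j a) ^ 2
        = x a * x a - 2 * (x a * ∑ j ∈ s, c j * e j a)
          + (∑ j ∈ s, c j * e j a) * (∑ j ∈ s, c j * e j a) := by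
      intro a; ring
    rw [Finset.sum_congr rfl fun a _ => h1 a]
    rw [Finset.sum_add_distrib, Finset.sum_sub_distrib]
    have h2 : ∑ a, x a * ∑ j ∈ s, c j * e j a = ∑ j ∈ s, c j ^ 2 := by
      have : ∀ a, x a * ∑ j ∈ s, c j * e j a = ∑ j ∈ s, c j * (e j a * x a) := by
        intro a; rw [Finset.mul_sum]; exact Finset.sum_congr rfl fun j _ => by ring
      rw [Finset.sum_congr rfl fun a _ => this a, Finset.sum_comm]
      apply Finset.sum_congr rfl
      intro j hj
      rw [← Finset.mul_sum]
      have hcj : (∑ a, e j a * x a) = c j := rfl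
      rw [hcj]
      ring
    have h3 : ∑ a, (∑ j ∈ s, c j * e j a) * (∑ j ∈ s, c j * e j a) = ∑ j ∈ s, c j ^ 2 := by
      have : ∀ a, (∑ j ∈ s, c j * e j a) * (∑ j ∈ s, c j * e j a)
          = ∑ j ∈ s, ∑ l ∈ s, (c j * c l) * (e j a * e l a) := by
        intro a
        rw [Finset.sum_mul_sum]
        exact Finset.sum_congr rfl fun j _ => Finset.sum_congr rfl fun l _ => by ring
      rw [Finset.sum_congr rfl fun a _ => this a, Finset.sum_comm]
      have : ∀ j ∈ s, ∑ a, ∑ l ∈ s, (c j * c l) * (e j a * e l a) = c j ^ 2 := by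
        intro j hj
        rw [Finset.sum_comm]
        have : ∀ l ∈ s, ∑ a, (c j * c l) * (e j a * e l a)
            = (c j * c l) * (if j = l then 1 else 0) := by
          intro l hl
          rw [← Finset.mul_sum, h j hj l hl]
        rw [Finset.sum_congr rfl this]
        rw [Finset.sum_eq_single_of_mem j hj (fun b _ hbj => by simp [Ne.symm hbj])]
        simp [pow_two]
      exact Finset.sum_congr rfl this
    have h2' : ∑ a, 2 * (x a * ∑ j ∈ s, c j * e j a) = 2 * ∑ j ∈ s, c j ^ 2 := by
      rw [← Finset.mul_sum, h2]
    rw [h2', h3]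
    ring
  rw [expand] at key
  have : ∑ j ∈ s, c j ^ 2 ≤ ∑ a, x a * x a := by linarith
  exact this

end ith

section kyfan

variable {X Y : Type*} [Fintype X] [Fintype Y] [DecidableEq X]

lemma basis_expansion {ι : Type*} [Fintype ι] (b : OrthonormalBasis ι ℝ (EuclideanSpace ℝ X))
    (u v : X → ℝ) : ∑ x, u x * v x = ∑ j, (∑ x, u x * b j x) * (∑ x, b j x * v x) := by
  have h := b.sum_inner_mul_inner ((WithLp.equiv 2 (X → ℝ)).symm u) ((WithLp.equiv 2 (X → ℝ)).symm v)
  simp only [PiLp.inner_apply, RCLike.inner_apply, conj_trivial] at h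
  convert h.symm using 2 <;> simp [mul_comm]

lemma dot_BB (B : Matrix Y X ℝ) (a b : X → ℝ) :
    ∑ y, (B *ᵥ a) y * (B *ᵥ b) y = ∑ x, a x * ((Bᴴ * B) *ᵥ b) x := by
  have h1 : ∑ y, (B *ᵥ a) y * (B *ᵥ b) y = (B *ᵥ a) ⬝ᵥ (B *ᵥ b) := rfl
  have h2 : ∑ x, a x * ((Bᴴ * B) *ᵥ b) x = a ⬝ᵥ ((Bᴴ * B) *ᵥ b) := rfl
  rw [h1, h2, ← Matrix.mulVec_mulVec, Matrix.dotProduct_mulVec a,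
    show Bᴴ = Bᵀ from Matrix.conjTranspose_eq_transpose_of_trivial B,
    Matrix.vecMul_transpose]

lemma swap_sum (B : Matrix Y X ℝ) (ψ0 : Y → ℝ) (v : X → ℝ) :
    ∑ x, (∑ y, ψ0 y * B y x) * v x = ∑ y, ψ0 y * ((B *ᵥ v) y) := by
  simp only [Matrix.mulVec, dotProduct, Finset.sum_mul, Finset.mul_sum]
  rw [Finset.sum_comm]
  exact Finset.sum_congr rfl fun y _ => Finset.sum_congr rfl fun x _ => by ring

/-- Ky Fan-type upper bound. -/
lemma kyfan_upper (B : Matrix Y X ℝ) (k : ℕ) (hk : k < Fintype.card X)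
    (φ : Fin k → X → ℝ) (ψ : Fin k → Y → ℝ)
    (hφ : ∀ i j, ∑ x, φ i x * φ j x = if i = j then 1 else 0)
    (hψ : ∀ i j, ∑ y, ψ i y * ψ j y = if i = j then 1 else 0) :
    ∑ i, ∑ y, ψ i y * (∑ x, B y x * φ i x) ≤ ∑ i ∈ Finset.range k, singularValue B i := by
  classical
  have hM := Matrix.isHermitian_conjTranspose_mul_self B
  set μ : X → ℝ := hM.eigenvalues with hμdef
  set w : X → X → ℝ := fun j => ⇑(hM.eigenvectorBasis j) with hwdef
  have hμ0 : ∀ j, 0 ≤ μ j := fun j => (Matrix.posSemidef_conjTranspose_mul_self B).eigenvalues_nonneg j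
  have hw_on : ∀ j l, ∑ x, w j x * w l x = if j = l then 1 else 0 := by
    intro j l
    have h := orthonormal_iff_ite.1 hM.eigenvectorBasis.orthonormal j l
    simp only [PiLp.inner_apply, RCLike.inner_apply, conj_trivial] at h
    rw [← h]; exact Finset.sum_congr rfl fun x _ => mul_comm _ _
  have hMw : ∀ j, (Bᴴ * B) *ᵥ w j = μ j • w j := fun j => hM.mulVec_eigenvectorBasis j
  have hBwBw : ∀ j l, ∑ y, (B *ᵥ w j) y * (B *ᵥ w l) y = μ l * (if j = l then 1 else 0) := by
    intro j l
    rw [dot_BB, hMw]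
    simp only [Pi.smul_apply, smul_eq_mul]
    rw [← hw_on j l, Finset.mul_sum]
    exact Finset.sum_congr rfl fun x _ => by ring
  set cc : Fin k → X → ℝ := fun i j => ∑ x, w j x * φ i x with hccdef
  set dd : Fin k → X → ℝ := fun i j => ∑ y, ψ i y * (B *ᵥ w j) y with hdddef
  set ss : Fin k → X → ℝ := fun i j => if μ j = 0 then 0 else dd i j ^ 2 / μ j with hssdef
  have hexp : ∀ i, ∑ y, ψ i y * (∑ x, B y x * φ i x) = ∑ j, cc i j * dd i j := by
    intro i
    have h0 : ∑ y, ψ i y * ((B *ᵥ φ i) y) = ∑ x, (∑ y, ψ i y * B y x) * φ i x :=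
      (swap_sum B (ψ i) (φ i)).symm
    have h1 := basis_expansion hM.eigenvectorBasis (fun x => ∑ y, ψ i y * B y x) (φ i)
    have h2 : ∀ j, (∑ x, (∑ y, ψ i y * B y x) * w j x) = dd i j := fun j => swap_sum B (ψ i) (w j)
    calc ∑ y, ψ i y * (∑ x, B y x * φ i x) = ∑ x, (∑ y, ψ i y * B y x) * φ i x := h0
      _ = ∑ j, (∑ x, (∑ y, ψ i y * B y x) * w j x) * (∑ x, w j x * φ i x) := h1
      _ = ∑ j, cc i j * dd i j := by
          refine Finset.sum_congr rfl fun j _ => ?_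
          rw [h2 j]; ring
  have hptbd : ∀ i j, cc i j * dd i j ≤ Real.sqrt (μ j) * (1/2 * (cc i j ^ 2 + ss i j)) := by
    intro i j
    rcases eq_or_lt_of_le (hμ0 j) with h0 | hpos
    · have hBw0 : ∀ y, (B *ᵥ w j) y = 0 := by
        intro y
        have hs := hBwBw j j
        rw [if_pos rfl, mul_one, ← h0] at hs
        have := (Finset.sum_eq_zero_iff_of_nonneg (fun y _ => mul_self_nonneg ((B *ᵥ w j) y))).1 hs
        have hy := this y (Finset.mem_univ y)
        nlinarith [hy]
      have hdd0 : dd i j = 0 := by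
        rw [hdddef]
        simp only
        rw [Finset.sum_eq_zero]
        intro y _
        rw [hBw0 y, mul_zero]
      rw [hdd0, mul_zero]
      have : ss i j = 0 := by rw [hssdef]; simp [← h0]
      rw [this]
      positivity
    · have hss : ss i j = dd i j ^ 2 / μ j := by rw [hssdef]; simp [ne_of_gt hpos]
      rw [hss]
      set r := Real.sqrt (μ j) with hr
      have hr0 : 0 < r := Real.sqrt_pos.2 hpos
      have hr2 : r ^ 2 = μ j := Real.sq_sqrt (le_of_lt hpos)
      have h1 : cc i j * dd i j ≤ (r^2 * cc i j^2 + dd i j^2)/(2*r) := by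
        rw [le_div_iff₀ (by linarith : (0:ℝ) < 2*r)]
        nlinarith [sq_nonneg (r * cc i j - dd i j)]
      have h2 : r * (1/2 * (cc i j ^ 2 + dd i j ^ 2 / μ j)) = (r^2 * cc i j^2 + dd i j^2)/(2*r) := by
        rw [← hr2]
        field_simp
      rw [h2]
      exact h1
  set C : X → ℝ := fun j => 1/2 * ∑ i, (cc i j ^ 2 + ss i j) with hCdef
  have hmain : ∑ i, ∑ y, ψ i y * (∑ x, B y x * φ i x) ≤ ∑ j, Real.sqrt (μ j) * C j := by
    calc ∑ i, ∑ y, ψ i y * (∑ x, B y x * φ i x) = ∑ i, ∑ j, cc i j * dd i j :=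
          Finset.sum_congr rfl fun i _ => hexp i
      _ ≤ ∑ i, ∑ j, Real.sqrt (μ j) * (1/2 * (cc i j ^ 2 + ss i j)) :=
          Finset.sum_le_sum fun i _ => Finset.sum_le_sum fun j _ => hptbd i j
      _ = ∑ j, Real.sqrt (μ j) * C j := by
          rw [Finset.sum_comm]
          refine Finset.sum_congr rfl fun j _ => ?_
          rw [show C j = 1/2 * ∑ i, (cc i j ^ 2 + ss i j) from rfl]
          simp only [Finset.mul_sum]
  have hC0 : ∀ j, 0 ≤ C j := by
    intro j
    apply mul_nonneg (by norm_num)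
    apply Finset.sum_nonneg
    intro i _
    have : 0 ≤ ss i j := by
      rw [hssdef]
      rcases eq_or_ne (μ j) 0 with h | h
      · simp [h]
      · simp only [if_neg h]
        exact div_nonneg (sq_nonneg _) (hμ0 j)
    nlinarith [sq_nonneg (cc i j)]
  have hC1 : ∀ j, C j ≤ 1 := by
    intro j
    have hb1 : ∑ i, cc i j ^ 2 ≤ 1 := by
      have := bessel_sum (Finset.univ : Finset (Fin k)) φ (w j)
        (fun i _ i' _ => hφ i i')
      rw [hw_on j j, if_pos rfl] at this
      calc ∑ i, cc i j ^ 2 = ∑ i, (∑ x, φ i x * w j x)^2 := by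
            refine Finset.sum_congr rfl fun i _ => ?_
            rw [hccdef]
            simp only
            rw [show ∑ x, w j x * φ i x = ∑ x, φ i x * w j x from Finset.sum_congr rfl fun x _ => by ring]
        _ ≤ 1 := this
    have hb2 : ∑ i, ss i j ≤ 1 := by
      rcases eq_or_ne (μ j) 0 with h | h
      · rw [hssdef]; simp [h]
      · have hpos : 0 < μ j := lt_of_le_of_ne (hμ0 j) (Ne.symm h)
        have := bessel_sum (Finset.univ : Finset (Fin k)) ψ (fun y => (B *ᵥ w j) y)
          (fun i _ i' _ => hψ i i')
        have hrhs : ∑ y, (B *ᵥ w j) y * (B *ᵥ w j) y = μ j := by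
          rw [hBwBw j j, if_pos rfl, mul_one]
        rw [hrhs] at this
        have heq : ∀ i, ss i j = (∑ y, ψ i y * (B *ᵥ w j) y)^2 / μ j := by
          intro i
          rw [hssdef]
          simp [h, hdddef]
        rw [Finset.sum_congr rfl fun i _ => heq i, ← Finset.sum_div]
        rw [div_le_one hpos]
        exact this
    rw [hCdef]
    simp only
    rw [Finset.sum_add_distrib]
    linarith
  have hCsum : ∑ j, C j ≤ (k : ℝ) := by
    have h1 : ∀ i, ∑ j, cc i j ^ 2 ≤ 1 := by
      intro i
      have := bessel_sum (Finset.univ : Finset X) w (φ i) (fun j _ l _ => hw_on j l)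
      rw [hφ i i, if_pos rfl] at this
      calc ∑ j, cc i j ^ 2 = ∑ j, (∑ x, w j x * φ i x)^2 := rfl
        _ ≤ 1 := this
    have h2 : ∀ i, ∑ j, ss i j ≤ 1 := by
      intro i
      set s : Finset X := Finset.univ.filter (fun j => μ j ≠ 0) with hs
      have hon : ∀ j ∈ s, ∀ l ∈ s, ∑ y, ((B *ᵥ w j) y / Real.sqrt (μ j)) * ((B *ᵥ w l) y / Real.sqrt (μ l)) = if j = l then 1 else 0 := by
        intro j hj l hl
        rw [Finset.mem_filter] at hj hl
        have hjpos : 0 < μ j := lt_of_le_of_ne (hμ0 j) (Ne.symm hj.2)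
        have hlpos : 0 < μ l := lt_of_le_of_ne (hμ0 l) (Ne.symm hl.2)
        have : ∀ y, ((B *ᵥ w j) y / Real.sqrt (μ j)) * ((B *ᵥ w l) y / Real.sqrt (μ l))
            = ((B *ᵥ w j) y * (B *ᵥ w l) y) / (Real.sqrt (μ j) * Real.sqrt (μ l)) := by
          intro y; field_simp
        rw [Finset.sum_congr rfl fun y _ => this y, ← Finset.sum_div, hBwBw j l]
        rcases eq_or_ne j l with rfl | hne
        · simp [Real.mul_self_sqrt (le_of_lt hjpos), div_self (ne_of_gt hjpos)]
        · simp [hne]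
      have hbes := bessel_sum s (fun j y => (B *ᵥ w j) y / Real.sqrt (μ j)) (ψ i) hon
      rw [hψ i i, if_pos rfl] at hbes
      have heq : ∀ j ∈ s, ss i j = (∑ y, ((B *ᵥ w j) y / Real.sqrt (μ j)) * ψ i y)^2 := by
        intro j hj
        rw [Finset.mem_filter] at hj
        have hjpos : 0 < μ j := lt_of_le_of_ne (hμ0 j) (Ne.symm hj.2)
        have h1 : ∑ y, ((B *ᵥ w j) y / Real.sqrt (μ j)) * ψ i y
            = (∑ y, ψ i y * (B *ᵥ w j) y) / Real.sqrt (μ j) := by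
          rw [Finset.sum_div]
          exact Finset.sum_congr rfl fun y _ => by ring
        rw [h1, div_pow, Real.sq_sqrt (le_of_lt hjpos), hssdef]
        simp [hj.2, hdddef]
      have hss0 : ∀ j ∈ (Finset.univ : Finset X), j ∉ s → ss i j = 0 := by
        intro j _ hj
        rw [hs, Finset.mem_filter] at hj
        push_neg at hj
        have : μ j = 0 := hj (Finset.mem_univ j)
        rw [hssdef]; simp [this]
      calc ∑ j, ss i j = ∑ j ∈ s, ss i j := (Finset.sum_subset (Finset.subset_univ s) hss0).symm
        _ = ∑ j ∈ s, (∑ y, ((B *ᵥ w j) y / Real.sqrt (μ j)) * ψ i y)^2 := Finset.sum_congr rfl heq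
        _ ≤ 1 := hbes
    calc ∑ j, C j = 1/2 * ∑ i, (∑ j, cc i j ^ 2 + ∑ j, ss i j) := by
          rw [hCdef, ← Finset.mul_sum]
          congr 1
          rw [Finset.sum_comm]
          exact Finset.sum_congr rfl fun i _ => by rw [Finset.sum_add_distrib]
      _ ≤ 1/2 * ∑ i : Fin k, (2 : ℝ) := by
          apply mul_le_mul_of_nonneg_left _ (by norm_num)
          apply Finset.sum_le_sum
          intro i _
          linarith [h1 i, h2 i]
      _ = (k : ℝ) := by simp; ring
  have hlp := lp_bound (fun j => Real.sqrt (μ j)) (fun j => Real.sqrt_nonneg _) C hC0 hC1 k hCsum hk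
  calc ∑ i, ∑ y, ψ i y * (∑ x, B y x * φ i x) ≤ ∑ j, Real.sqrt (μ j) * C j := hmain
    _ ≤ ∑ i ∈ Finset.range k, ithLargest (fun j => Real.sqrt (μ j)) i := hlp
    _ = ∑ i ∈ Finset.range k, singularValue B i := by
        refine Finset.sum_congr rfl fun i _ => ?_
        rw [ithLargest_comp_monotone μ Real.sqrt (fun a b h => Real.sqrt_le_sqrt h) Real.sqrt_zero i]
        rfl

end kyfan
section attain

variable {X Y : Type*} [Fintype X] [Fintype Y] [DecidableEq X]

open scoped RealInnerProductSpace

lemma inner_eq_sum {Z : Type*} [Fintype Z] (a b : EuclideanSpace ℝ Z) :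
    ⟪a, b⟫ = ∑ z, a z * b z := by
  simp [PiLp.inner_apply, RCLike.inner_apply, conj_trivial, mul_comm]

set_option maxHeartbeats 1600000 in
lemma kyfan_attain (B : Matrix Y X ℝ) (u : X → ℝ) (v : Y → ℝ)
    (hu : ∑ x, u x * u x = 1) (hv : ∑ y, v y * v y = 1)
    (hBu : ∀ y, (∑ x, B y x * u x) = 0) (hvB : ∀ x, ∑ y, v y * B y x = 0)
    (k : ℕ) (hkX : k + 1 ≤ Fintype.card X) (hkY : k + 1 ≤ Fintype.card Y) :
    ∃ (φ : Fin k → X → ℝ) (ψ : Fin k → Y → ℝ),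
      (∀ i j, ∑ x, φ i x * φ j x = if i = j then 1 else 0) ∧
      (∀ i j, ∑ y, ψ i y * ψ j y = if i = j then 1 else 0) ∧
      (∀ i, ∑ x, u x * φ i x = 0) ∧ (∀ i, ∑ y, v y * ψ i y = 0) ∧
      ∑ i, ∑ y, ψ i y * (∑ x, B y x * φ i x) = ∑ i ∈ Finset.range k, singularValue B i := by
  classical
  have hM := Matrix.isHermitian_conjTranspose_mul_self B
  set μ : X → ℝ := hM.eigenvalues with hμdef
  set wB := hM.eigenvectorBasis with hwBdef
  set w : X → X → ℝ := fun j => ⇑(wB j) with hwdef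
  have hμ0 : ∀ j, 0 ≤ μ j := fun j => (Matrix.posSemidef_conjTranspose_mul_self B).eigenvalues_nonneg j
  have hw_on : ∀ j l, ∑ x, w j x * w l x = if j = l then 1 else 0 := by
    intro j l
    have h := orthonormal_iff_ite.1 wB.orthonormal j l
    simp only [PiLp.inner_apply, RCLike.inner_apply, conj_trivial] at h
    rw [← h]; exact Finset.sum_congr rfl fun x _ => mul_comm _ _
  have hMw : ∀ j, (Bᴴ * B) *ᵥ w j = μ j • w j := fun j => hM.mulVec_eigenvectorBasis j
  have hBwBw : ∀ j l, ∑ y, (B *ᵥ w j) y * (B *ᵥ w l) y = μ l * (if j = l then 1 else 0) := by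
    intro j l
    rw [dot_BB, hMw]
    simp only [Pi.smul_apply, smul_eq_mul]
    rw [← hw_on j l, Finset.mul_sum]
    exact Finset.sum_congr rfl fun x _ => by ring
  have hBw0 : ∀ j, μ j = 0 → ∀ y, (B *ᵥ w j) y = 0 := by
    intro j h0 y
    have hs := hBwBw j j
    rw [if_pos rfl, mul_one, h0] at hs
    have := (Finset.sum_eq_zero_iff_of_nonneg (fun y _ => mul_self_nonneg ((B *ᵥ w j) y))).1 hs y (Finset.mem_univ y)
    nlinarith [this]
  have hu_orth : ∀ j, μ j ≠ 0 → ∑ x, u x * w j x = 0 := by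
    intro j hj
    have h1 : ∑ y, (B *ᵥ u) y * (B *ᵥ w j) y = ∑ x, u x * ((Bᴴ * B) *ᵥ w j) x := dot_BB B u (w j)
    have h2 : ∑ y, (B *ᵥ u) y * (B *ᵥ w j) y = 0 := by
      apply Finset.sum_eq_zero
      intro y _
      have : (B *ᵥ u) y = 0 := hBu y
      rw [this, zero_mul]
    rw [h2, hMw j] at h1
    simp only [Pi.smul_apply, smul_eq_mul] at h1
    have h3 : ∑ x, u x * (μ j * w j x) = μ j * ∑ x, u x * w j x := by
      rw [Finset.mul_sum]
      exact Finset.sum_congr rfl fun x _ => by ring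
    rw [h3] at h1
    exact (mul_eq_zero.1 h1.symm).resolve_left hj
  -- v orthogonal to B *ᵥ anything
  have hv_orth : ∀ a : X → ℝ, ∑ y, v y * (B *ᵥ a) y = 0 := by
    intro a
    rw [← swap_sum B v a]
    apply Finset.sum_eq_zero
    intro x _
    rw [hvB x, zero_mul]
  obtain ⟨π, hanti, hval⟩ := ithLargest_enum μ
  have hkn : k < Fintype.card X := by omega
  have hkm : k < Fintype.card Y := by omega
  set iX : Fin k → Fin (Fintype.card X) := fun i => ⟨(i : ℕ), lt_trans i.2 hkn⟩ with hiXdef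
  set ρ : Fin k → X := fun i => π (iX i) with hρdef
  have hρinj : Function.Injective ρ := by
    intro a b hab
    have h1 : iX a = iX b := π.injective hab
    have h2 : (a : ℕ) = (b : ℕ) := by simpa [hiXdef] using congrArg Fin.val h1
    exact Fin.ext h2
  -- X side basis
  set uE : EuclideanSpace ℝ X := (WithLp.equiv 2 (X → ℝ)).symm u with huEdef
  set i0 : Fin (Fintype.card X) := ⟨0, by omega⟩ with hi0def
  set em : Fin k → Fin (Fintype.card X) := fun i => ⟨(i : ℕ) + 1, by omega⟩ with hemdef
  have heminj : Function.Injective em := by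
    intro a b hab
    have := congrArg Fin.val hab
    simp only [hemdef] at this
    exact Fin.ext (by omega)
  have hemne : ∀ i, em i ≠ i0 := by
    intro i h
    have := congrArg Fin.val h
    simp only [hemdef, hi0def] at this
    omega
  set valX : Fin (Fintype.card X) → EuclideanSpace ℝ X :=
    fun j => if h : 0 < (j : ℕ) ∧ (j : ℕ) < k + 1
      then (WithLp.equiv 2 (X → ℝ)).symm (w (ρ ⟨(j : ℕ) - 1, by omega⟩)) else uE with hvalXdef
  have hvalX0 : valX i0 = uE := by
    rw [hvalXdef]
    simp only
    rw [dif_neg (by simp [hi0def])]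
  have hvalXem : ∀ i, valX (em i) = (WithLp.equiv 2 (X → ℝ)).symm (w (ρ i)) := by
    intro i
    rw [hvalXdef]
    simp only
    have h1 : 0 < ((em i) : ℕ) ∧ ((em i) : ℕ) < k + 1 := by
      constructor <;> (simp only [hemdef]; omega)
    rw [dif_pos h1]
    have h2 : (⟨((em i) : ℕ) - 1, by omega⟩ : Fin k) = i := by
      apply Fin.ext
      simp only [hemdef]
      omega
    rw [h2]
  set sX : Set (Fin (Fintype.card X)) := {i0} ∪ (em '' {i | 0 < μ (ρ i)}) with hsXdef
  have hi0mem : i0 ∈ sX := Or.inl rfl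
  have hemmem : ∀ i, 0 < μ (ρ i) → em i ∈ sX := fun i h => Or.inr ⟨i, h, rfl⟩
  have honX : Orthonormal ℝ (sX.restrict valX) := by
    rw [orthonormal_iff_ite]
    rintro ⟨a, ha⟩ ⟨b, hb⟩
    have hcompute : ⟪valX a, valX b⟫ = if a = b then 1 else 0 := by
      rcases ha with rfl | ⟨ia, hia, rfl⟩ <;> rcases hb with rfl | ⟨ib, hib, rfl⟩
      · rw [if_pos rfl, hvalX0, inner_eq_sum]
        exact hu
      · rw [if_neg (Ne.symm (hemne ib)), hvalX0, hvalXem ib, inner_eq_sum]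
        show ∑ x, u x * w (ρ ib) x = 0
        exact hu_orth (ρ ib) (ne_of_gt hib)
      · rw [if_neg (hemne ia), hvalX0, hvalXem ia, inner_eq_sum]
        show ∑ x, w (ρ ia) x * u x = 0
        rw [← hu_orth (ρ ia) (ne_of_gt hia)]
        exact Finset.sum_congr rfl fun x _ => by ring
      · rw [hvalXem ia, hvalXem ib, inner_eq_sum]
        show ∑ x, w (ρ ia) x * w (ρ ib) x = _
        rw [hw_on (ρ ia) (ρ ib)]
        by_cases hab : ia = ib
        · subst hab; simp
        · rw [if_neg (fun hh => hab (hρinj hh)), if_neg (fun hh => hab (heminj hh))]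
    change ⟪valX a, valX b⟫ = _; rw [hcompute]
    by_cases hab : a = b
    · subst hab; simp
    · rw [if_neg hab, if_neg (fun hh => hab (Subtype.ext_iff.1 hh))]
  obtain ⟨bX, hbX⟩ := honX.exists_orthonormalBasis_extension_of_card_eq
    (by simp)
  set φ : Fin k → X → ℝ := fun i => ⇑(bX (em i)) with hφdef
  have hφ_on : ∀ i j, ∑ x, φ i x * φ j x = if i = j then 1 else 0 := by
    intro i j
    have h := orthonormal_iff_ite.1 bX.orthonormal (em i) (em j)
    simp only [PiLp.inner_apply, RCLike.inner_apply, conj_trivial] at h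
    show ∑ x, (bX (em i)) x * (bX (em j)) x = _
    rw [Finset.sum_congr rfl fun x _ => mul_comm ((bX (em i)) x) _, h]
    by_cases hij : i = j
    · subst hij; simp
    · rw [if_neg (fun hh => hij (heminj hh)), if_neg hij]
  have hbXi0 : bX i0 = uE := by rw [hbX i0 hi0mem, hvalX0]
  have hφu : ∀ i, ∑ x, u x * φ i x = 0 := by
    intro i
    have h := orthonormal_iff_ite.1 bX.orthonormal i0 (em i)
    rw [if_neg (Ne.symm (hemne i)), hbXi0, inner_eq_sum] at h
    exact h
  have hφpos : ∀ i, 0 < μ (ρ i) → φ i = w (ρ i) := by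
    intro i h
    rw [hφdef]
    simp only
    rw [hbX (em i) (hemmem i h), hvalXem]
    rfl
  -- Y side basis
  set vE : EuclideanSpace ℝ Y := (WithLp.equiv 2 (Y → ℝ)).symm v with hvEdef
  set bw : Fin k → Y → ℝ :=
    fun i => fun y => (Real.sqrt (μ (ρ i)))⁻¹ * (B *ᵥ w (ρ i)) y with hbwdef
  have hbwbw : ∀ ia ib, 0 < μ (ρ ia) → 0 < μ (ρ ib) →
      ∑ y, bw ia y * bw ib y = if ia = ib then 1 else 0 := by
    intro ia ib ha hb
    have h1 : ∑ y, bw ia y * bw ib y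
        = (Real.sqrt (μ (ρ ia)))⁻¹ * ((Real.sqrt (μ (ρ ib)))⁻¹ * ∑ y, (B *ᵥ w (ρ ia)) y * (B *ᵥ w (ρ ib)) y) := by
      rw [Finset.mul_sum, Finset.mul_sum]
      exact Finset.sum_congr rfl fun y _ => by rw [hbwdef]; ring
    rw [h1, hBwBw (ρ ia) (ρ ib)]
    by_cases hab : ia = ib
    · subst hab
      rw [if_pos rfl, if_pos rfl, mul_one]
      rw [← Real.sqrt_mul_self (le_of_lt hb)]
      have hs : Real.sqrt (μ (ρ ia)) ≠ 0 := ne_of_gt (Real.sqrt_pos.2 hb)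
      field_simp
      rw [Real.sq_sqrt (Real.sqrt_nonneg _)]
    · rw [if_neg (fun hh => hab (hρinj hh)), if_neg hab]
      ring
  have hvbw : ∀ i, ∑ y, v y * bw i y = 0 := by
    intro i
    have h1 : ∑ y, v y * bw i y = (Real.sqrt (μ (ρ i)))⁻¹ * ∑ y, v y * (B *ᵥ w (ρ i)) y := by
      rw [Finset.mul_sum]
      exact Finset.sum_congr rfl fun y _ => by rw [hbwdef]; ring
    rw [h1, hv_orth (w (ρ i)), mul_zero]
  set i0Y : Fin (Fintype.card Y) := ⟨0, by omega⟩ with hi0Ydef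
  set emY : Fin k → Fin (Fintype.card Y) := fun i => ⟨(i : ℕ) + 1, by omega⟩ with hemYdef
  have hemYinj : Function.Injective emY := by
    intro a b hab
    have := congrArg Fin.val hab
    simp only [hemYdef] at this
    exact Fin.ext (by omega)
  have hemYne : ∀ i, emY i ≠ i0Y := by
    intro i h
    have := congrArg Fin.val h
    simp only [hemYdef, hi0Ydef] at this
    omega
  set valY : Fin (Fintype.card Y) → EuclideanSpace ℝ Y :=
    fun j => if h : 0 < (j : ℕ) ∧ (j : ℕ) < k + 1
      then (WithLp.equiv 2 (Y → ℝ)).symm (bw ⟨(j : ℕ) - 1, by omega⟩) else vE with hvalYdef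
  have hvalY0 : valY i0Y = vE := by
    rw [hvalYdef]
    simp only
    rw [dif_neg (by simp [hi0Ydef])]
  have hvalYem : ∀ i, valY (emY i) = (WithLp.equiv 2 (Y → ℝ)).symm (bw i) := by
    intro i
    rw [hvalYdef]
    simp only
    have h1 : 0 < ((emY i) : ℕ) ∧ ((emY i) : ℕ) < k + 1 := by
      constructor <;> (simp only [hemYdef]; omega)
    rw [dif_pos h1]
    have h2 : (⟨((emY i) : ℕ) - 1, by omega⟩ : Fin k) = i := by
      apply Fin.ext
      simp only [hemYdef]
      omega
    rw [h2]
  set sY : Set (Fin (Fintype.card Y)) := {i0Y} ∪ (emY '' {i | 0 < μ (ρ i)}) with hsYdef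
  have hi0Ymem : i0Y ∈ sY := Or.inl rfl
  have hemYmem : ∀ i, 0 < μ (ρ i) → emY i ∈ sY := fun i h => Or.inr ⟨i, h, rfl⟩
  have honY : Orthonormal ℝ (sY.restrict valY) := by
    rw [orthonormal_iff_ite]
    rintro ⟨a, ha⟩ ⟨b, hb⟩
    have hcompute : ⟪valY a, valY b⟫ = if a = b then 1 else 0 := by
      rcases ha with rfl | ⟨ia, hia, rfl⟩ <;> rcases hb with rfl | ⟨ib, hib, rfl⟩
      · rw [if_pos rfl, hvalY0, inner_eq_sum]
        exact hv
      · rw [if_neg (Ne.symm (hemYne ib)), hvalY0, hvalYem ib, inner_eq_sum]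
        show ∑ y, v y * bw ib y = 0
        exact hvbw ib
      · rw [if_neg (hemYne ia), hvalY0, hvalYem ia, inner_eq_sum]
        show ∑ y, bw ia y * v y = 0
        rw [← hvbw ia]
        exact Finset.sum_congr rfl fun y _ => by ring
      · rw [hvalYem ia, hvalYem ib, inner_eq_sum]
        show ∑ y, bw ia y * bw ib y = _
        rw [hbwbw ia ib hia hib]
        by_cases hab : ia = ib
        · subst hab; simp
        · rw [if_neg hab, if_neg (fun hh => hab (hemYinj hh))]
    change ⟪valY a, valY b⟫ = _; rw [hcompute]
    by_cases hab : a = b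
    · subst hab; simp
    · rw [if_neg hab, if_neg (fun hh => hab (Subtype.ext_iff.1 hh))]
  obtain ⟨bY, hbY⟩ := honY.exists_orthonormalBasis_extension_of_card_eq
    (by simp)
  set ψ : Fin k → Y → ℝ := fun i => ⇑(bY (emY i)) with hψdef
  have hψ_on : ∀ i j, ∑ y, ψ i y * ψ j y = if i = j then 1 else 0 := by
    intro i j
    have h := orthonormal_iff_ite.1 bY.orthonormal (emY i) (emY j)
    simp only [PiLp.inner_apply, RCLike.inner_apply, conj_trivial] at h
    show ∑ y, (bY (emY i)) y * (bY (emY j)) y = _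
    rw [Finset.sum_congr rfl fun y _ => mul_comm ((bY (emY i)) y) _, h]
    by_cases hij : i = j
    · subst hij; simp
    · rw [if_neg (fun hh => hij (hemYinj hh)), if_neg hij]
  have hbYi0 : bY i0Y = vE := by rw [hbY i0Y hi0Ymem, hvalY0]
  have hψv : ∀ i, ∑ y, v y * ψ i y = 0 := by
    intro i
    have h := orthonormal_iff_ite.1 bY.orthonormal i0Y (emY i)
    rw [if_neg (Ne.symm (hemYne i)), hbYi0, inner_eq_sum] at h
    exact h
  have hψpos : ∀ i, 0 < μ (ρ i) → ψ i = bw i := by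
    intro i h
    rw [hψdef]
    simp only
    rw [hbY (emY i) (hemYmem i h), hvalYem]
    rfl
  -- singular values along ρ
  have hsv : ∀ i : Fin k, singularValue B (i : ℕ) = Real.sqrt (μ (ρ i)) := by
    intro i
    show Real.sqrt (ithLargest μ (i : ℕ)) = _
    have : (i : ℕ) = ((iX i : Fin (Fintype.card X)) : ℕ) := rfl
    rw [this, hval (iX i)]
  -- per-index value
  have hterm : ∀ i : Fin k, ∑ y, ψ i y * (∑ x, B y x * φ i x) = Real.sqrt (μ (ρ i)) := by
    intro i
    rcases lt_or_eq_of_le (hμ0 (ρ i)) with hpos | hzero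
    · rw [hφpos i hpos, hψpos i hpos]
      have h1 : ∑ y, bw i y * (∑ x, B y x * w (ρ i) x)
          = (Real.sqrt (μ (ρ i)))⁻¹ * ∑ y, (B *ᵥ w (ρ i)) y * (B *ᵥ w (ρ i)) y := by
        rw [Finset.mul_sum]
        refine Finset.sum_congr rfl fun y _ => ?_
        rw [hbwdef]
        show (Real.sqrt (μ (ρ i)))⁻¹ * (B *ᵥ w (ρ i)) y * ((B *ᵥ w (ρ i)) y) = _
        ring
      rw [h1, hBwBw (ρ i) (ρ i), if_pos rfl, mul_one]
      rw [← Real.sqrt_mul_self (le_of_lt hpos)]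
      have hs : Real.sqrt (μ (ρ i)) ≠ 0 := ne_of_gt (Real.sqrt_pos.2 hpos)
      field_simp
      rw [Real.sq_sqrt (Real.sqrt_nonneg _)]
    · -- zero case
      have hworth : ∀ j, μ j ≠ 0 → ∑ x, φ i x * w j x = 0 := by
        intro j hj
        set jf := π.symm j with hjfdef
        have hπjf : π jf = j := π.apply_symm_apply j
        have hjflt : (jf : ℕ) < (i : ℕ) := by
          by_contra hcon
          push_neg at hcon
          have hle : iX i ≤ jf := by
            rw [hiXdef]
            exact hcon
          have := hanti hle
          simp only [Function.comp] at this
          rw [hπjf] at this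
          have : μ j ≤ μ (ρ i) := this
          rw [← hzero] at this
          exact hj (le_antisymm this (hμ0 j))
        set i' : Fin k := ⟨(jf : ℕ), lt_trans hjflt i.2⟩ with hi'def
        have hiXi' : iX i' = jf := by
          apply Fin.ext
          simp [hiXdef, hi'def]
        have hρi' : ρ i' = j := by
          rw [hρdef]
          simp only
          rw [hiXi', hπjf]
        have hμi' : 0 < μ (ρ i') := by
          rw [hρi']
          exact lt_of_le_of_ne (hμ0 j) (Ne.symm hj)
        have hbXem : bX (em i') = (WithLp.equiv 2 (X → ℝ)).symm (w (ρ i')) := by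
          rw [hbX (em i') (hemmem i' hμi'), hvalXem]
        have hne : em i' ≠ em i := by
          intro hh
          have := heminj hh
          rw [hi'def] at this
          have := congrArg Fin.val this
          simp at this
          omega
        have h := orthonormal_iff_ite.1 bX.orthonormal (em i) (em i')
        rw [if_neg (fun hh => hne hh.symm), inner_eq_sum] at h
        rw [← hρi']
        calc ∑ x, φ i x * w (ρ i') x = ∑ x, (bX (em i)) x * (bX (em i')) x := by
              rw [hbXem]
              exact Finset.sum_congr rfl fun x _ => rfl
          _ = 0 := h
      have hBφ0 : ∀ y, (B *ᵥ φ i) y = 0 := by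
        have hD : ∑ y, (B *ᵥ φ i) y * (B *ᵥ φ i) y = 0 := by
          rw [dot_BB]
          rw [basis_expansion wB (φ i) ((Bᴴ * B) *ᵥ φ i)]
          apply Finset.sum_eq_zero
          intro j _
          by_cases hj : μ j = 0
          · have h4 : ∑ x, w j x * ((Bᴴ * B) *ᵥ φ i) x = 0 := by
              rw [← dot_BB B (w j) (φ i)]
              apply Finset.sum_eq_zero
              intro y _
              rw [hBw0 j hj y, zero_mul]
            rw [show ∑ x, (wB j) x * ((Bᴴ * B) *ᵥ φ i) x = 0 from h4, mul_zero]
          · rw [show ∑ x, φ i x * (wB j) x = 0 from hworth j hj, zero_mul]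
        intro y
        have := (Finset.sum_eq_zero_iff_of_nonneg
          (fun y _ => mul_self_nonneg ((B *ᵥ φ i) y))).1 hD y (Finset.mem_univ y)
        nlinarith [this]
      have hz : ∑ y, ψ i y * (∑ x, B y x * φ i x) = 0 := by
        apply Finset.sum_eq_zero
        intro y _
        rw [show ∑ x, B y x * φ i x = 0 from hBφ0 y, mul_zero]
      rw [hz, show μ (ρ i) = 0 from hzero.symm, Real.sqrt_zero]
  refine ⟨φ, ψ, hφ_on, hψ_on, hφu, hψv, ?_⟩
  rw [← Fin.sum_univ_eq_sum_range (fun i => singularValue B i) k]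
  refine Finset.sum_congr rfl fun i _ => ?_
  rw [hterm i, hsv i]


end attain


set_option maxHeartbeats 1600000 in
theorem stmt_2 {X Y : Type*} [Fintype X] [Fintype Y] [DecidableEq X] [DecidableEq Y]
    (P : X → Y → ℝ) (hP : ∀ x y, 0 ≤ P x y) (hPsum : ∑ x, ∑ y, P x y = 1)
    (PX : X → ℝ) (hPXdef : ∀ x, PX x = ∑ y, P x y)
    (PY : Y → ℝ) (hPYdef : ∀ y, PY y = ∑ x, P x y)
    (hPXpos : ∀ x, 0 < PX x) (hPYpos : ∀ y, 0 < PY y)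
    (B : Matrix Y X ℝ)
    (hB : ∀ x y, B y x = (P x y - PX x * PY y) / (Real.sqrt (PX x) * Real.sqrt (PY y)))
    (k : ℕ) (hk1 : 1 ≤ k) (hkK : k ≤ min (Fintype.card X) (Fintype.card Y) - 1)
    (Feas : (Fin k → X → ℝ) → (Fin k → Y → ℝ) → Prop)
    (hFeas : ∀ f g, Feas f g ↔
      ((∀ i, ∑ x, PX x * f i x = 0) ∧ (∀ i, ∑ y, PY y * g i y = 0) ∧
       (∀ i j, ∑ x, PX x * f i x * f j x = if i = j then 1 else 0) ∧
       (∀ i j, ∑ y, PY y * g i y * g j y = if i = j then 1 else 0))) :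
    (∃ f g, Feas f g ∧
        ∑ i : Fin k, ∑ x, ∑ y, P x y * f i x * g i y
          = ∑ i ∈ Finset.range k, singularValue B i) ∧
    (∀ f g, Feas f g →
        ∑ i : Fin k, ∑ x, ∑ y, P x y * f i x * g i y
          ≤ ∑ i ∈ Finset.range k, singularValue B i) ∧
    (∃ f g, Feas f g ∧
        ∑ x, ∑ y, P x y * (∑ i : Fin k, (f i x - g i y) ^ 2)
          = 2 * (k : ℝ) - 2 * ∑ i ∈ Finset.range k, singularValue B i) ∧
    (∀ f g, Feas f g →
        2 * (k : ℝ) - 2 * ∑ i ∈ Finset.range k, singularValue B i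
          ≤ ∑ x, ∑ y, P x y * (∑ i : Fin k, (f i x - g i y) ^ 2)) := by
  have hPX1 : ∑ x, PX x = 1 := by
    rw [Finset.sum_congr rfl fun x _ => hPXdef x]
    exact hPsum
  have hPY1 : ∑ y, PY y = 1 := by
    rw [Finset.sum_congr rfl fun y _ => hPYdef y, Finset.sum_comm]
    exact hPsum
  set u : X → ℝ := fun x => Real.sqrt (PX x) with hudef
  set v : Y → ℝ := fun y => Real.sqrt (PY y) with hvdef
  have hune : ∀ x, u x ≠ 0 := fun x => ne_of_gt (Real.sqrt_pos.2 (hPXpos x))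
  have hvne : ∀ y, v y ≠ 0 := fun y => ne_of_gt (Real.sqrt_pos.2 (hPYpos y))
  have huu : ∀ x, u x * u x = PX x := fun x => Real.mul_self_sqrt (le_of_lt (hPXpos x))
  have hvv : ∀ y, v y * v y = PY y := fun y => Real.mul_self_sqrt (le_of_lt (hPYpos y))
  have hu : ∑ x, u x * u x = 1 := by rw [Finset.sum_congr rfl fun x _ => huu x]; exact hPX1
  have hv : ∑ y, v y * v y = 1 := by rw [Finset.sum_congr rfl fun y _ => hvv y]; exact hPY1
  have hkX : k + 1 ≤ Fintype.card X := by
    have := min_le_left (Fintype.card X) (Fintype.card Y)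
    omega
  have hkY : k + 1 ≤ Fintype.card Y := by
    have := min_le_right (Fintype.card X) (Fintype.card Y)
    omega
  have hBform : ∀ x y, B y x * u x = (P x y - PX x * PY y) / v y := by
    intro x y
    rw [hB x y]
    rw [show Real.sqrt (PX x) = u x from rfl, show Real.sqrt (PY y) = v y from rfl]
    rw [show (P x y - PX x * PY y) / (u x * v y) * u x
        = (P x y - PX x * PY y) / v y * (u x / u x) from by ring,
      div_self (hune x), mul_one]
  have hBu : ∀ y, (∑ x, B y x * u x) = 0 := by
    intro y
    rw [Finset.sum_congr rfl fun x _ => hBform x y]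
    rw [← Finset.sum_div]
    have : ∑ x, (P x y - PX x * PY y) = 0 := by
      rw [Finset.sum_sub_distrib, ← hPYdef y, ← Finset.sum_mul, hPX1, one_mul, sub_self]
    rw [this, zero_div]
  have hvB : ∀ x, ∑ y, v y * B y x = 0 := by
    intro x
    have hform : ∀ y, v y * B y x = (P x y - PX x * PY y) / u x := by
      intro y
      rw [hB x y]
      rw [show Real.sqrt (PX x) = u x from rfl, show Real.sqrt (PY y) = v y from rfl]
      rw [show v y * ((P x y - PX x * PY y) / (u x * v y))
          = (P x y - PX x * PY y) / u x * (v y / v y) from by ring,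
        div_self (hvne y), mul_one]
    rw [Finset.sum_congr rfl fun y _ => hform y]
    rw [← Finset.sum_div]
    have : ∑ y, (P x y - PX x * PY y) = 0 := by
      rw [Finset.sum_sub_distrib, ← hPXdef x, ← Finset.mul_sum, hPY1, mul_one, sub_self]
    rw [this, zero_div]
  -- the key identity between the two objective forms
  have hkey : ∀ (f : X → ℝ) (g : Y → ℝ), (∑ x, PX x * f x = 0) →
      ∑ y, (v y * g y) * (∑ x, B y x * (u x * f x)) = ∑ x, ∑ y, P x y * f x * g y := by
    intro f g hf
    have hterm : ∀ y x, B y x * (u x * f x) = (P x y - PX x * PY y) * f x / v y := by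
      intro y x
      rw [← mul_assoc, hBform x y, div_mul_eq_mul_div]
    have hinner : ∀ y, (v y * g y) * (∑ x, B y x * (u x * f x))
        = g y * ∑ x, (P x y - PX x * PY y) * f x := by
      intro y
      rw [Finset.sum_congr rfl fun x _ => hterm y x, ← Finset.sum_div]
      rw [div_eq_mul_inv, ← mul_assoc]
      rw [show v y * g y * (∑ x, (P x y - PX x * PY y) * f x) * (v y)⁻¹
        = (v y * (v y)⁻¹) * (g y * ∑ x, (P x y - PX x * PY y) * f x) from by ring]
      rw [mul_inv_cancel₀ (hvne y), one_mul]
    rw [Finset.sum_congr rfl fun y _ => hinner y]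
    have hexpand : ∀ y, g y * ∑ x, (P x y - PX x * PY y) * f x
        = (∑ x, P x y * f x * g y) - (PY y * g y) * ∑ x, PX x * f x := by
      intro y
      rw [Finset.mul_sum, Finset.mul_sum, ← Finset.sum_sub_distrib]
      exact Finset.sum_congr rfl fun x _ => by ring
    rw [Finset.sum_congr rfl fun y _ => hexpand y]
    rw [Finset.sum_sub_distrib]
    have h0 : ∑ y, (PY y * g y) * ∑ x, PX x * f x = 0 := by
      rw [hf]
      simp
    rw [h0, sub_zero, Finset.sum_comm]
  -- upper bound
  have hUB : ∀ f g, Feas f g →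
      ∑ i : Fin k, ∑ x, ∑ y, P x y * f i x * g i y
        ≤ ∑ i ∈ Finset.range k, singularValue B i := by
    intro f g hfg
    obtain ⟨hf0, hg0, hff, hgg⟩ := (hFeas f g).1 hfg
    set φ : Fin k → X → ℝ := fun i x => u x * f i x with hφdef
    set ψ : Fin k → Y → ℝ := fun i y => v y * g i y with hψdef
    have hφon : ∀ i j, ∑ x, φ i x * φ j x = if i = j then 1 else 0 := by
      intro i j
      rw [← hff i j]
      refine Finset.sum_congr rfl fun x _ => ?_
      rw [hφdef]
      simp only
      rw [← huu x]
      ring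
    have hψon : ∀ i j, ∑ y, ψ i y * ψ j y = if i = j then 1 else 0 := by
      intro i j
      rw [← hgg i j]
      refine Finset.sum_congr rfl fun y _ => ?_
      rw [hψdef]
      simp only
      rw [← hvv y]
      ring
    have := kyfan_upper B k (by omega) φ ψ hφon hψon
    calc ∑ i : Fin k, ∑ x, ∑ y, P x y * f i x * g i y
        = ∑ i, ∑ y, ψ i y * (∑ x, B y x * φ i x) := by
          refine Finset.sum_congr rfl fun i _ => ?_
          exact (hkey (f i) (g i) (hf0 i)).symm
      _ ≤ ∑ i ∈ Finset.range k, singularValue B i := this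
  -- existence
  have hEX : ∃ f g, Feas f g ∧
      ∑ i : Fin k, ∑ x, ∑ y, P x y * f i x * g i y
        = ∑ i ∈ Finset.range k, singularValue B i := by
    obtain ⟨φ, ψ, hφon, hψon, hφu, hψv, hvalue⟩ :=
      kyfan_attain B u v hu hv hBu hvB k hkX hkY
    set f : Fin k → X → ℝ := fun i x => φ i x / u x with hfdef
    set g : Fin k → Y → ℝ := fun i y => ψ i y / v y with hgdef
    have hfφ : ∀ i x, u x * f i x = φ i x := by
      intro i x
      rw [hfdef]
      simp only
      rw [mul_div_cancel₀ _ (hune x)]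
    have hgψ : ∀ i y, v y * g i y = ψ i y := by
      intro i y
      rw [hgdef]
      simp only
      rw [mul_div_cancel₀ _ (hvne y)]
    have hfeas : Feas f g := by
      rw [hFeas]
      refine ⟨?_, ?_, ?_, ?_⟩
      · intro i
        rw [← hφu i]
        refine Finset.sum_congr rfl fun x _ => ?_
        rw [show PX x * f i x = u x * (u x * f i x) from by rw [← huu x]; ring, hfφ i x]
      · intro i
        rw [← hψv i]
        refine Finset.sum_congr rfl fun y _ => ?_
        rw [show PY y * g i y = v y * (v y * g i y) from by rw [← hvv y]; ring, hgψ i y]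
      · intro i j
        rw [← hφon i j]
        refine Finset.sum_congr rfl fun x _ => ?_
        rw [show PX x * f i x * f j x = (u x * f i x) * (u x * f j x) from by rw [← huu x]; ring,
          hfφ i x, hfφ j x]
      · intro i j
        rw [← hψon i j]
        refine Finset.sum_congr rfl fun y _ => ?_
        rw [show PY y * g i y * g j y = (v y * g i y) * (v y * g j y) from by rw [← hvv y]; ring,
          hgψ i y, hgψ j y]
    refine ⟨f, g, hfeas, ?_⟩
    have hf0 : ∀ i, ∑ x, PX x * f i x = 0 := ((hFeas f g).1 hfeas).1
    calc ∑ i : Fin k, ∑ x, ∑ y, P x y * f i x * g i y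
        = ∑ i, ∑ y, ψ i y * (∑ x, B y x * φ i x) := by
          refine Finset.sum_congr rfl fun i _ => ?_
          rw [← hkey (f i) (g i) (hf0 i)]
          refine (Finset.sum_congr rfl fun y _ => ?_).symm
          rw [hgψ i y]
          congr 1
          exact Finset.sum_congr rfl fun x _ => by rw [hfφ i x]
      _ = ∑ i ∈ Finset.range k, singularValue B i := hvalue
  -- the distance identity
  have hdist : ∀ f g, Feas f g →
      ∑ x, ∑ y, P x y * (∑ i : Fin k, (f i x - g i y) ^ 2)
        = 2 * (k : ℝ) - 2 * ∑ i : Fin k, ∑ x, ∑ y, P x y * f i x * g i y := by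
    intro f g hfg
    obtain ⟨hf0, hg0, hff, hgg⟩ := (hFeas f g).1 hfg
    have h1 : ∀ x, ∑ y, P x y * (∑ i : Fin k, (f i x - g i y) ^ 2)
        = ∑ i : Fin k, ∑ y, P x y * (f i x - g i y) ^ 2 := by
      intro x
      calc ∑ y, P x y * (∑ i : Fin k, (f i x - g i y) ^ 2)
          = ∑ y, ∑ i : Fin k, P x y * (f i x - g i y) ^ 2 :=
            Finset.sum_congr rfl fun y _ => Finset.mul_sum _ _ _
        _ = ∑ i : Fin k, ∑ y, P x y * (f i x - g i y) ^ 2 := Finset.sum_comm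
    have hswap : ∑ x, ∑ y, P x y * (∑ i : Fin k, (f i x - g i y) ^ 2)
        = ∑ i : Fin k, ∑ x, ∑ y, P x y * (f i x - g i y) ^ 2 := by
      rw [Finset.sum_congr rfl fun x _ => h1 x, Finset.sum_comm]
    rw [hswap]
    have hterm : ∀ i : Fin k, ∑ x, ∑ y, P x y * (f i x - g i y) ^ 2
        = 2 - 2 * ∑ x, ∑ y, P x y * f i x * g i y := by
      intro i
      have hexp : ∀ x y, P x y * (f i x - g i y) ^ 2
          = P x y * f i x ^ 2 + P x y * g i y ^ 2 - 2 * (P x y * f i x * g i y) := by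
        intro x y; ring
      have h1 : ∑ x, ∑ y, P x y * f i x ^ 2 = 1 := by
        have : ∀ x, ∑ y, P x y * f i x ^ 2 = PX x * f i x * f i x := by
          intro x
          rw [← Finset.sum_mul, ← hPXdef x]
          ring
        rw [Finset.sum_congr rfl fun x _ => this x, hff i i, if_pos rfl]
      have h2 : ∑ x, ∑ y, P x y * g i y ^ 2 = 1 := by
        rw [Finset.sum_comm]
        have : ∀ y, ∑ x, P x y * g i y ^ 2 = PY y * g i y * g i y := by
          intro y
          rw [← Finset.sum_mul, ← hPYdef y]
          ring
        rw [Finset.sum_congr rfl fun y _ => this y, hgg i i, if_pos rfl]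
      calc ∑ x, ∑ y, P x y * (f i x - g i y) ^ 2
          = ∑ x, ∑ y, (P x y * f i x ^ 2 + P x y * g i y ^ 2 - 2 * (P x y * f i x * g i y)) := by
            exact Finset.sum_congr rfl fun x _ => Finset.sum_congr rfl fun y _ => hexp x y
        _ = ∑ x, ((∑ y, P x y * f i x ^ 2) + (∑ y, P x y * g i y ^ 2)
            - 2 * ∑ y, P x y * f i x * g i y) := by
            refine Finset.sum_congr rfl fun x _ => ?_
            rw [Finset.sum_sub_distrib, Finset.sum_add_distrib, ← Finset.mul_sum]
        _ = (∑ x, ∑ y, P x y * f i x ^ 2) + (∑ x, ∑ y, P x y * g i y ^ 2)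
            - 2 * ∑ x, ∑ y, P x y * f i x * g i y := by
            rw [Finset.sum_sub_distrib, Finset.sum_add_distrib, ← Finset.mul_sum]
        _ = 2 - 2 * ∑ x, ∑ y, P x y * f i x * g i y := by rw [h1, h2]; ring
    rw [Finset.sum_congr rfl fun i _ => hterm i]
    rw [Finset.sum_sub_distrib, Finset.mul_sum]
    simp [Finset.sum_const, Finset.card_univ]
    ring
  refine ⟨hEX, hUB, ?_, ?_⟩
  · obtain ⟨f, g, hfeas, hval⟩ := hEX
    exact ⟨f, g, hfeas, by rw [hdist f g hfeas, hval]⟩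
  · intro f g hfeas
    rw [hdist f g hfeas]
    have := hUB f g hfeas
    linarith
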